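/- Let k be a field of odd characteristic p, and let f, g ∈ k[T] be non-zero coprime polynomials, not both constant. Then for every n > 2 with p ∤ n, the polynomial f_n = f^n - g^n has a primitive prime divisor: there is an irreducible π ∈ k[T] with π ∣ f_n and π ∤ f_m for all 1 ≤ m < n. -/

import Mathlib

open Polynomial

section Aux

variable {k : Type*} [Field k]

/-- Homogenized evaluation of a one-variable polynomial `P` at the pair `(f, g)`:
`∑ aᵢ f^i g^(deg P - i)` where `P = ∑ aᵢ X^i`. -/
noncomputable def homEval (P f g : Polynomial k) : Polynomial k :=
  ∑ i ∈ Finset.range (P.natDegree + 1), C (P.coeff i) * f ^ i * g ^ (P.natDegree - i)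

lemma homEval_ringHom {L : Type*} [Field L] (ψ : Polynomial k →+* L) (P f g : Polynomial k)
    (hg : ψ g ≠ 0) :
    ψ (homEval P f g) = ψ g ^ P.natDegree * Polynomial.eval₂ (ψ.comp C) (ψ f / ψ g) P := by
  rw [Polynomial.eval₂_eq_sum_range, homEval, map_sum, Finset.mul_sum]
  refine Finset.sum_congr rfl fun i hi => ?_
  rw [Finset.mem_range, Nat.lt_succ_iff] at hi
  rw [map_mul, map_mul, map_pow, map_pow, RingHom.comp_apply, div_pow,
    pow_sub₀ _ hg hi]
  field_simp

lemma homEval_one (f g : Polynomial k) : homEval 1 f g = 1 := by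
  simp [homEval]

lemma homEval_mul (P Q f g : Polynomial k) (hP : P ≠ 0) (hQ : Q ≠ 0) (hg : g ≠ 0) :
    homEval (P * Q) f g = homEval P f g * homEval Q f g := by
  have hinj := IsFractionRing.injective (Polynomial k) (FractionRing (Polynomial k))
  apply hinj
  have hg' : algebraMap (Polynomial k) (FractionRing (Polynomial k)) g ≠ 0 := by
    intro h
    exact hg (hinj (by simpa using h))
  rw [map_mul, homEval_ringHom _ _ _ _ hg', homEval_ringHom _ _ _ _ hg',
    homEval_ringHom _ _ _ _ hg', Polynomial.natDegree_mul hP hQ, Polynomial.eval₂_mul, pow_add]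
  ring

lemma homEval_prod {ι : Type*} (s : Finset ι) (P : ι → Polynomial k) (f g : Polynomial k)
    (hP : ∀ i ∈ s, P i ≠ 0) (hg : g ≠ 0) :
    homEval (∏ i ∈ s, P i) f g = ∏ i ∈ s, homEval (P i) f g := by
  induction s using Finset.cons_induction with
  | empty => simpa using homEval_one f g
  | cons a s ha ih =>
    rw [Finset.prod_cons, Finset.prod_cons,
      homEval_mul _ _ _ _ (hP a (Finset.mem_cons_self a s))
        (Finset.prod_ne_zero_iff.mpr fun i hi => hP i (Finset.mem_cons_of_mem hi)) hg,
      ih fun i hi => hP i (Finset.mem_cons_of_mem hi)]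

lemma homEval_cyclotomic_prod (n : ℕ) (hn : 0 < n) (f g : Polynomial k) (hg : g ≠ 0) :
    ∏ d ∈ n.divisors, homEval (Polynomial.cyclotomic d k) f g = f ^ n - g ^ n := by
  have hinj := IsFractionRing.injective (Polynomial k) (FractionRing (Polynomial k))
  apply hinj
  set ψ := algebraMap (Polynomial k) (FractionRing (Polynomial k)) with hψ
  have hg' : ψ g ≠ 0 := by
    intro h
    exact hg (hinj (by simpa using h))
  rw [map_prod]
  calc ∏ d ∈ n.divisors, ψ (homEval (Polynomial.cyclotomic d k) f g)
      = ∏ d ∈ n.divisors, (ψ g ^ (Polynomial.cyclotomic d k).natDegree *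
          Polynomial.eval₂ (ψ.comp C) (ψ f / ψ g) (Polynomial.cyclotomic d k)) := by
        exact Finset.prod_congr rfl fun d _ => homEval_ringHom ψ _ f g hg'
    _ = ψ g ^ n * Polynomial.eval₂ (ψ.comp C) (ψ f / ψ g)
          (∏ d ∈ n.divisors, Polynomial.cyclotomic d k) := by
        rw [Finset.prod_mul_distrib, ← Polynomial.eval₂_finset_prod, Finset.prod_pow_eq_pow_sum]
        congr 2
        calc ∑ d ∈ n.divisors, (Polynomial.cyclotomic d k).natDegree
            = ∑ d ∈ n.divisors, d.totient := by
              exact Finset.sum_congr rfl fun d _ => Polynomial.natDegree_cyclotomic d k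
          _ = n := Nat.sum_totient n
    _ = ψ (f ^ n - g ^ n) := by
        rw [Polynomial.prod_cyclotomic_eq_X_pow_sub_one hn, Polynomial.eval₂_sub,
          Polynomial.eval₂_X_pow, Polynomial.eval₂_one, div_pow, map_sub, map_pow, map_pow]
        field_simp

lemma homEval_cyclotomic_dvd (n : ℕ) (hn : 0 < n) (f g : Polynomial k) (hg : g ≠ 0) :
    homEval (Polynomial.cyclotomic n k) f g ∣ f ^ n - g ^ n := by
  rw [← homEval_cyclotomic_prod n hn f g hg]
  exact Finset.dvd_prod_of_mem _ (Nat.mem_divisors_self n hn.ne')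

lemma g_dvd_homEval (P f g : Polynomial k) :
    g ∣ homEval P f g - C P.leadingCoeff * f ^ P.natDegree := by
  rw [homEval, Finset.sum_range_succ, Nat.sub_self, pow_zero, mul_one, Polynomial.leadingCoeff,
    add_sub_cancel_right]
  refine Finset.dvd_sum fun i hi => ?_
  rw [Finset.mem_range] at hi
  exact Dvd.dvd.mul_left (dvd_pow_self g (Nat.sub_ne_zero_of_lt hi)) _

lemma f_dvd_homEval (P f g : Polynomial k) :
    f ∣ homEval P f g - C (P.coeff 0) * g ^ P.natDegree := by
  rw [homEval, Finset.sum_range_succ']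
  simp only [pow_zero, mul_one, Nat.sub_zero]
  rw [add_sub_cancel_right]
  refine Finset.dvd_sum fun i _ => ?_
  exact ((dvd_pow_self f i.succ_ne_zero).mul_left _).mul_right _

lemma homEval_map {L : Type*} [Field L] (ρ : k →+* L) (P f g : Polynomial k) :
    (homEval P f g).map ρ = homEval (P.map ρ) (f.map ρ) (g.map ρ) := by
  rw [homEval, homEval, Polynomial.natDegree_map, Polynomial.map_sum]
  exact Finset.sum_congr rfl fun i _ => by
    rw [Polynomial.map_mul, Polynomial.map_mul, Polynomial.map_pow, Polynomial.map_pow,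
      Polynomial.map_C, Polynomial.coeff_map]

lemma homEval_X_sub_C {L : Type*} [Field L] (μ : L) (f g : Polynomial L) :
    homEval (X - C μ) f g = f - C μ * g := by
  rw [homEval, Polynomial.natDegree_X_sub_C, Finset.sum_range_succ, Finset.sum_range_one]
  simp [Polynomial.coeff_X, Polynomial.coeff_C]
  ring

lemma homEval_cyclotomic_natDegree_pos (p : ℕ) (hp : p.Prime) [CharP k p]
    (f g : Polynomial k) (hf : f ≠ 0) (hg : g ≠ 0) (hfg : IsCoprime f g)
    (hconst : ¬ (f.natDegree = 0 ∧ g.natDegree = 0)) (n : ℕ) (hn2 : 2 < n) (hpn : ¬ p ∣ n) :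
    1 ≤ (homEval (Polynomial.cyclotomic n k) f g).natDegree := by
  have hn0 : 0 < n := by omega
  set L := AlgebraicClosure k
  set ρ := algebraMap k L with hρ
  haveI : CharP L p := charP_of_injective_ringHom (ρ.injective) p
  haveI : NeZero ((n : L)) := ⟨by rw [Ne, CharP.cast_eq_zero_iff L p]; exact hpn⟩
  obtain ⟨ζ, hζ⟩ := HasEnoughRootsOfUnity.exists_primitiveRoot L n
  set F := f.map ρ with hF
  set G := g.map ρ with hG
  have hG0 : G ≠ 0 := by
    simpa [hG, Polynomial.map_eq_zero] using hg
  have hFG : IsCoprime F G := by simpa using hfg.map (Polynomial.mapRingHom ρ)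
  have hfac : ∀ μ ∈ primitiveRoots n L, F - C μ * G ≠ 0 := by
    intro μ hμ hzero
    have hμ' : IsPrimitiveRoot μ n := (mem_primitiveRoots hn0).mp hμ
    have hμ0 : μ ≠ 0 := hμ'.ne_zero hn0.ne'
    have hFeq : F = C μ * G := by linear_combination hzero
    have hGunit : IsUnit G := hFG.isUnit_of_dvd' ⟨C μ, by rw [hFeq]; ring⟩ dvd_rfl
    have hGdeg : G.natDegree = 0 := Polynomial.natDegree_eq_zero_of_isUnit hGunit
    have hFdeg : F.natDegree = 0 := by
      rw [hFeq, Polynomial.natDegree_C_mul hμ0, hGdeg]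
    exact hconst ⟨by rwa [hF, Polynomial.natDegree_map] at hFdeg,
      by rwa [hG, Polynomial.natDegree_map] at hGdeg⟩
  have key : (homEval (Polynomial.cyclotomic n k) f g).natDegree
      = ∑ μ ∈ primitiveRoots n L, (F - C μ * G).natDegree := by
    rw [← Polynomial.natDegree_map (p := homEval (Polynomial.cyclotomic n k) f g) ρ,
      homEval_map, Polynomial.map_cyclotomic,
      Polynomial.cyclotomic_eq_prod_X_sub_primitiveRoots hζ,
      homEval_prod _ _ _ _ (fun μ _ => Polynomial.X_sub_C_ne_zero μ) hG0]
    rw [show (∏ μ ∈ primitiveRoots n L, homEval (X - C μ) F G)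
        = ∏ μ ∈ primitiveRoots n L, (F - C μ * G) from
      Finset.prod_congr rfl fun μ _ => homEval_X_sub_C μ F G]
    exact Polynomial.natDegree_prod _ _ hfac
  rw [key]
  by_contra hlt
  push_neg at hlt
  interval_cases h : (∑ μ ∈ primitiveRoots n L, (F - C μ * G).natDegree)
  rw [Finset.sum_eq_zero_iff] at h
  have hcard : 1 < (primitiveRoots n L).card := by
    rw [hζ.card_primitiveRoots]
    have h1 : 0 < n.totient := Nat.totient_pos.mpr hn0
    obtain ⟨r, hr⟩ := Nat.totient_even hn2
    omega
  obtain ⟨μ₁, hμ₁, μ₂, hμ₂, hne⟩ := Finset.one_lt_card.mp hcard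
  have h1 := h μ₁ hμ₁
  have h2 := h μ₂ hμ₂
  have hdiff : (F - C μ₁ * G) - (F - C μ₂ * G) = C (μ₂ - μ₁) * G := by
    rw [map_sub]; ring
  have hGdeg : G.natDegree = 0 := by
    have hd := Polynomial.natDegree_sub_le (F - C μ₁ * G) (F - C μ₂ * G)
    rw [hdiff, h1, h2, Polynomial.natDegree_C_mul (sub_ne_zero.mpr hne.symm)] at hd
    omega
  have hFdeg : F.natDegree = 0 := by
    have : F = (F - C μ₁ * G) + C μ₁ * G := by ring
    have hd := Polynomial.natDegree_add_le (F - C μ₁ * G) (C μ₁ * G)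
    have hd2 : (C μ₁ * G).natDegree ≤ 0 := le_trans (Polynomial.natDegree_C_mul_le μ₁ G)
      (le_of_eq hGdeg)
    rw [← this, h1] at hd
    omega
  exact hconst ⟨by rwa [hF, Polynomial.natDegree_map] at hFdeg,
    by rwa [hG, Polynomial.natDegree_map] at hGdeg⟩

end Aux

/-- Theorem 1.3 (odd positive characteristic): for `n > 2` not divisible by the
characteristic `p`, the polynomial `f^n - g^n` has a primitive prime divisor. -/
theorem stmt_4 {k : Type*} [Field k] (p : ℕ) (hp : p.Prime) (hodd : Odd p) [CharP k p]
    (f g : Polynomial k) (hf : f ≠ 0) (hg : g ≠ 0) (hfg : IsCoprime f g)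
    (hconst : ¬ (f.natDegree = 0 ∧ g.natDegree = 0)) :
    ∀ n : ℕ, 2 < n → ¬ p ∣ n →
      ∃ π : Polynomial k, Irreducible π ∧ π ∣ f ^ n - g ^ n ∧
        ∀ m : ℕ, 1 ≤ m → m < n → ¬ π ∣ f ^ m - g ^ m := by
  intro n hn2 hpn
  have hn0 : 0 < n := by omega
  have hn1 : 1 < n := by omega
  set Φ := homEval (Polynomial.cyclotomic n k) f g with hΦdef
  have hΦdeg : 1 ≤ Φ.natDegree :=
    homEval_cyclotomic_natDegree_pos p hp f g hf hg hfg hconst n hn2 hpn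
  have hΦ0 : Φ ≠ 0 := by
    intro h
    rw [h] at hΦdeg
    simp at hΦdeg
  have hΦu : ¬ IsUnit Φ := by
    intro h
    have := Polynomial.natDegree_eq_zero_of_isUnit h
    omega
  obtain ⟨π, hπirr, hπΦ⟩ := WfDvdMonoid.exists_irreducible_factor hΦu hΦ0
  have hπprime : Prime π := hπirr.prime
  refine ⟨π, hπirr, hπΦ.trans (homEval_cyclotomic_dvd n hn0 f g hg), ?_⟩
  intro m hm1 hmn hπm
  have hnotboth : ¬ (π ∣ f ∧ π ∣ g) := fun ⟨h1, h2⟩ =>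
    hπirr.not_isUnit (hfg.isUnit_of_dvd' h1 h2)
  have hd := Polynomial.natDegree_cyclotomic n k
  have hπg : ¬ π ∣ g := by
    intro hdvd
    have h5 : g ∣ Φ - f ^ (Polynomial.cyclotomic n k).natDegree := by
      have := g_dvd_homEval (Polynomial.cyclotomic n k) f g
      rwa [(Polynomial.cyclotomic.monic n k).leadingCoeff, map_one, one_mul] at this
    have hπfn : π ∣ f ^ (Polynomial.cyclotomic n k).natDegree := by
      have := dvd_sub hπΦ (hdvd.trans h5)
      simpa using this
    exact hnotboth ⟨hπprime.dvd_of_dvd_pow hπfn, hdvd⟩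
  have hπf : ¬ π ∣ f := by
    intro hdvd
    have h5 : f ∣ Φ - g ^ (Polynomial.cyclotomic n k).natDegree := by
      have := f_dvd_homEval (Polynomial.cyclotomic n k) f g
      rwa [Polynomial.cyclotomic_coeff_zero k hn1, map_one, one_mul] at this
    have hπgn : π ∣ g ^ (Polynomial.cyclotomic n k).natDegree := by
      have := dvd_sub hπΦ (hdvd.trans h5)
      simpa using this
    exact hnotboth ⟨hdvd, hπprime.dvd_of_dvd_pow hπgn⟩
  -- pass to the residue field
  haveI hmax : (Ideal.span {π}).IsMaximal := PrincipalIdealRing.isMaximal_of_irreducible hπirr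
  letI : Field (Polynomial k ⧸ Ideal.span {π}) := Ideal.Quotient.field (Ideal.span {π})
  set ψ : Polynomial k →+* Polynomial k ⧸ Ideal.span {π} := Ideal.Quotient.mk (Ideal.span {π})
    with hψdef
  have hker : ∀ x : Polynomial k, ψ x = 0 ↔ π ∣ x := fun x =>
    Ideal.Quotient.eq_zero_iff_dvd π x
  have hψg : ψ g ≠ 0 := fun h => hπg ((hker g).mp h)
  have hψf : ψ f ≠ 0 := fun h => hπf ((hker f).mp h)
  set u := ψ f / ψ g with hu
  have hpow : ∀ j : ℕ, π ∣ f ^ j - g ^ j → u ^ j = 1 := by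
    intro j hj
    have h0 : ψ (f ^ j - g ^ j) = 0 := (hker _).mpr hj
    rw [map_sub, map_pow, map_pow, sub_eq_zero] at h0
    rw [hu, div_pow, h0, div_self (pow_ne_zero _ hψg)]
  have hum : u ^ m = 1 := hpow m hπm
  have hun : u ^ n = 1 := hpow n ((hπΦ.trans (homEval_cyclotomic_dvd n hn0 f g hg)))
  set m' := Nat.gcd m n with hm'def
  have hm'pos : 0 < m' := Nat.gcd_pos_of_pos_left n (by omega)
  have hm'n : m' ∣ n := Nat.gcd_dvd_right m n
  have hm'lt : m' < n := lt_of_le_of_lt (Nat.le_of_dvd (by omega) (Nat.gcd_dvd_left m n)) hmn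
  have hum' : u ^ m' = 1 :=
    orderOf_dvd_iff_pow_eq_one.mp
      (Nat.dvd_gcd (orderOf_dvd_of_pow_eq_one hum) (orderOf_dvd_of_pow_eq_one hun))
  -- u is a root of cyclotomic n
  have hcyc : (Polynomial.cyclotomic n (Polynomial k ⧸ Ideal.span {π})).IsRoot u := by
    have h0 : ψ Φ = 0 := (hker Φ).mpr hπΦ
    rw [homEval_ringHom ψ _ _ _ hψg] at h0
    rcases mul_eq_zero.mp h0 with h | h
    · exact absurd h (pow_ne_zero _ hψg)
    · rw [Polynomial.eval₂_eq_eval_map] at h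
      rwa [Polynomial.map_cyclotomic] at h
  -- squarefreeness of X^n - 1 gives the contradiction
  haveI : CharP (Polynomial k ⧸ Ideal.span {π}) p :=
    charP_of_injective_ringHom (ψ.comp Polynomial.C).injective p
  have hsf : Squarefree (X ^ n - 1 : Polynomial (Polynomial k ⧸ Ideal.span {π})) := by
    have hn' : ((n : Polynomial k ⧸ Ideal.span {π})) ≠ 0 := by
      rw [Ne, CharP.cast_eq_zero_iff (Polynomial k ⧸ Ideal.span {π}) p]
      exact hpn
    have hsep := Polynomial.separable_X_pow_sub_C (1 : Polynomial k ⧸ Ideal.span {π})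
      hn' one_ne_zero
    rw [map_one] at hsep
    exact hsep.squarefree
  have hdvd1 : (X - C u) ∣ (X ^ m' - 1 : Polynomial (Polynomial k ⧸ Ideal.span {π})) := by
    apply Polynomial.dvd_iff_isRoot.mpr
    simp [Polynomial.IsRoot, hum']
  have hdvd2 : (X - C u) ∣ Polynomial.cyclotomic n (Polynomial k ⧸ Ideal.span {π}) :=
    Polynomial.dvd_iff_isRoot.mpr hcyc
  have hprod : (X ^ m' - 1) * Polynomial.cyclotomic n (Polynomial k ⧸ Ideal.span {π})
      ∣ (X ^ n - 1 : Polynomial (Polynomial k ⧸ Ideal.span {π})) := by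
    rw [← Polynomial.prod_cyclotomic_eq_X_pow_sub_one hn0,
      ← Polynomial.prod_cyclotomic_eq_X_pow_sub_one hm'pos]
    have hnmem : n ∉ m'.divisors := by
      intro hmem
      have := Nat.le_of_dvd hm'pos (Nat.mem_divisors.mp hmem).1
      omega
    have hsub : insert n m'.divisors ⊆ n.divisors := by
      intro d hdm
      rcases Finset.mem_insert.mp hdm with rfl | hdm
      · exact Nat.mem_divisors_self d hn0.ne'
      · exact Nat.mem_divisors.mpr ⟨(Nat.mem_divisors.mp hdm).1.trans hm'n, hn0.ne'⟩
    calc (∏ d ∈ m'.divisors, Polynomial.cyclotomic d (Polynomial k ⧸ Ideal.span {π})) *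
          Polynomial.cyclotomic n (Polynomial k ⧸ Ideal.span {π})
        = ∏ d ∈ insert n m'.divisors, Polynomial.cyclotomic d (Polynomial k ⧸ Ideal.span {π}) := by
          rw [Finset.prod_insert hnmem]; ring
      _ ∣ ∏ d ∈ n.divisors, Polynomial.cyclotomic d (Polynomial k ⧸ Ideal.span {π}) :=
          Finset.prod_dvd_prod_of_subset _ _ _ hsub
  have hsq : (X - C u) * (X - C u)
      ∣ (X ^ n - 1 : Polynomial (Polynomial k ⧸ Ideal.span {π})) :=
    (mul_dvd_mul hdvd1 hdvd2).trans hprod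
  exact Polynomial.not_isUnit_X_sub_C u (hsf _ hsq)
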